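/- Let ρ_{AB} be a density matrix on a bipartite Hilbert space A⊗B and U a unitary such that Tr(Uρ_{AB}U† · (|0⟩⟨0|_A ⊗ I_B)) ≥ 1 - ε. Set ρ* = Uρ_{AB}U†, ρ*_B = Tr_A ρ*, and r = rank(ρ_{AB}). Then the trace distance satisfies T(ρ*, |0⟩⟨0|_A ⊗ ρ*_B) ≤ 2√(rε). -/

import Mathlib

open Matrix
open scoped Kronecker ComplexOrder

/-- The square root of a positive semidefinite matrix (Mathlib's former `Matrix.PosSemidef.sqrt`). -/
noncomputable def Matrix.PosSemidef.sqrt {n : Type*} [Fintype n] [DecidableEq n]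
    {A : Matrix n n ℂ} (hA : A.PosSemidef) : Matrix n n ℂ :=
  hA.1.eigenvectorUnitary.1 * diagonal ((↑) ∘ (√·) ∘ hA.1.eigenvalues) *
    (star hA.1.eigenvectorUnitary : Matrix n n ℂ)

open scoped MatrixOrder in
lemma Matrix.PosSemidef.sqrt_eq_cfc_sqrt {n : Type*} [Fintype n] [DecidableEq n]
    {A : Matrix n n ℂ} (hA : A.PosSemidef) : hA.sqrt = CFC.sqrt A := by
  rw [CFC.sqrt_eq_real_sqrt A hA.nonneg, cfcₙ_eq_cfc, hA.1.cfc_eq]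
  rfl

open scoped MatrixOrder in
lemma Matrix.PosSemidef.posSemidef_sqrt {n : Type*} [Fintype n] [DecidableEq n]
    {A : Matrix n n ℂ} (hA : A.PosSemidef) : hA.sqrt.PosSemidef := by
  rw [hA.sqrt_eq_cfc_sqrt]
  exact (CFC.sqrt_nonneg A).posSemidef

open scoped MatrixOrder in
lemma Matrix.PosSemidef.sqrt_mul_self {n : Type*} [Fintype n] [DecidableEq n]
    {A : Matrix n n ℂ} (hA : A.PosSemidef) : hA.sqrt * hA.sqrt = A := by
  rw [hA.sqrt_eq_cfc_sqrt]
  exact CFC.sqrt_mul_sqrt_self A hA.nonneg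

open scoped MatrixOrder in
lemma Matrix.PosSemidef.eq_sqrt_of_sq_eq {n : Type*} [Fintype n] [DecidableEq n]
    {A B : Matrix n n ℂ} (hB : B.PosSemidef) (hA : A.PosSemidef) (h : B ^ 2 = A) :
    B = hA.sqrt := by
  rw [hA.sqrt_eq_cfc_sqrt]
  exact (CFC.sqrt_unique (by rw [← h, sq]) hB.nonneg).symm

/-- The trace norm `‖A‖₁ = Tr √(Aᴴ A)`. -/
noncomputable def traceNorm {n : Type*} [Fintype n] [DecidableEq n]
    (A : Matrix n n ℂ) : ℝ :=
  ((Matrix.posSemidef_conjTranspose_mul_self A).sqrt).trace.re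

/-- The trace distance `T(ρ,σ) = ‖ρ - σ‖₁ / 2`. -/
noncomputable def traceDist {n : Type*} [Fintype n] [DecidableEq n]
    (ρ σ : Matrix n n ℂ) : ℝ :=
  traceNorm (ρ - σ) / 2

/-- Partial trace over system `A` of a matrix on the bipartite system `A ⊗ B`. -/
noncomputable def ptraceA {a b : ℕ} (M : Matrix (Fin a × Fin b) (Fin a × Fin b) ℂ) :
    Matrix (Fin b) (Fin b) ℂ :=
  Matrix.of fun i j => ∑ k : Fin a, M (k, i) (k, j)

section Helpers
set_option linter.unusedSectionVars false
variable {n : Type*} [Fintype n] [DecidableEq n]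

/-- quadratic form expansion -/
lemma quad_expand (M : Matrix n n ℂ) (y : n → ℂ) :
    star y ⬝ᵥ (M *ᵥ y) = ∑ k, ∑ l, (starRingEnd ℂ) (y k) * M k l * y l := by
  simp [dotProduct, Matrix.mulVec, Finset.mul_sum, mul_assoc]

lemma diag_entry_nonneg {X : Matrix n n ℂ} (hX : X.PosSemidef) (i : n) :
    0 ≤ (X i i).re ∧ (X i i).im = 0 := by
  have h := hX.dotProduct_mulVec_nonneg ((Pi.single i 1 : n → ℂ))
  rw [quad_expand] at h
  have : ∑ k, ∑ l, (starRingEnd ℂ) ((Pi.single i 1 : n → ℂ) k) * X k l * (Pi.single i 1 : n → ℂ) l = X i i := by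
    rw [Finset.sum_eq_single i]
    · rw [Finset.sum_eq_single i] <;> simp +contextual [Pi.single_apply]
    · intro k _ hk
      apply Finset.sum_eq_zero
      intro l _
      simp [Pi.single_apply, hk]
    · simp
  rw [this] at h
  rw [Complex.le_def] at h
  simpa using ⟨h.1, h.2.symm⟩

lemma trace_re_nonneg {X : Matrix n n ℂ} (hX : X.PosSemidef) : 0 ≤ X.trace.re := by
  rw [Matrix.trace]
  rw [Complex.re_sum]
  exact Finset.sum_nonneg fun i _ => (diag_entry_nonneg hX i).1

/-- the "sign sandwich" matrix -/
noncomputable def sdw (V : Matrix n n ℂ) (s : n → ℝ) : Matrix n n ℂ :=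
  V * Matrix.diagonal (fun i => (s i : ℂ)) * Vᴴ

lemma sdw_conjTranspose (V : Matrix n n ℂ) (s : n → ℝ) : (sdw V s)ᴴ = sdw V s := by
  have h : star (fun i => ((s i : ℝ) : ℂ)) = fun i => ((s i : ℝ) : ℂ) := by
    funext i
    simp [Complex.conj_ofReal]
  rw [sdw, conjTranspose_mul, conjTranspose_mul, conjTranspose_conjTranspose,
      diagonal_conjTranspose, h, Matrix.mul_assoc]

lemma sdw_mul_sdw {V : Matrix n n ℂ} (hV : V ∈ Matrix.unitaryGroup n ℂ) (s t : n → ℝ) :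
    sdw V s * sdw V t = sdw V (fun i => s i * t i) := by
  have h1 : Vᴴ * V = 1 := by
    rw [← Matrix.star_eq_conjTranspose]
    exact (Matrix.mem_unitaryGroup_iff'.mp hV)
  simp only [sdw]
  calc V * diagonal (fun i => (s i : ℂ)) * Vᴴ * (V * diagonal (fun i => (t i : ℂ)) * Vᴴ)
      = V * diagonal (fun i => (s i : ℂ)) * (Vᴴ * V) * diagonal (fun i => (t i : ℂ)) * Vᴴ := by
        simp only [Matrix.mul_assoc]
    _ = V * (diagonal (fun i => (s i : ℂ)) * diagonal (fun i => (t i : ℂ))) * Vᴴ := by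
        rw [h1]; simp only [Matrix.mul_one, Matrix.mul_assoc]
    _ = V * diagonal (fun i => ((s i * t i : ℝ) : ℂ)) * Vᴴ := by
        rw [Matrix.diagonal_mul_diagonal]; push_cast; rfl

/-- key bound: |Re Tr (sdw V s * X)| ≤ Re Tr X for PSD X -/
lemma re_trace_sdw_mul_le {V : Matrix n n ℂ} (hV : V ∈ Matrix.unitaryGroup n ℂ)
    {s : n → ℝ} (hs : ∀ i, |s i| ≤ 1) {X : Matrix n n ℂ} (hX : X.PosSemidef) :
    |((sdw V s * X).trace).re| ≤ X.trace.re := by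
  have h2 : V * Vᴴ = 1 := by
    rw [← Matrix.star_eq_conjTranspose]
    exact (Matrix.mem_unitaryGroup_iff.mp hV)
  have hY : (Vᴴ * X * V).PosSemidef := by
    have := hX.mul_mul_conjTranspose_same Vᴴ
    rwa [conjTranspose_conjTranspose] at this
  have htr : (sdw V s * X).trace
      = (Matrix.diagonal (fun i => (s i : ℂ)) * (Vᴴ * X * V)).trace := by
    rw [sdw, Matrix.trace_mul_comm (V * diagonal (fun i => (s i : ℂ)) * Vᴴ) X]
    rw [show X * (V * diagonal (fun i => (s i : ℂ)) * Vᴴ)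
        = (X * V) * diagonal (fun i => (s i : ℂ)) * Vᴴ by simp only [Matrix.mul_assoc]]
    rw [Matrix.trace_mul_cycle]
    rw [show Vᴴ * (X * V) * diagonal (fun i => (s i : ℂ))
        = (Vᴴ * X * V) * diagonal (fun i => (s i : ℂ)) by simp only [Matrix.mul_assoc]]
    rw [Matrix.trace_mul_comm]
  have hYtr : (Vᴴ * X * V).trace = X.trace := by
    rw [Matrix.trace_mul_cycle, h2, Matrix.one_mul]
  have hdiag : (Matrix.diagonal (fun i => (s i : ℂ)) * (Vᴴ * X * V)).trace
      = ∑ i, (s i : ℂ) * (Vᴴ * X * V) i i := by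
    rw [Matrix.trace]
    congr 1
    ext i
    rw [Matrix.diag_apply, Matrix.diagonal_mul]
  rw [htr, hdiag, ← hYtr]
  have hre : (Vᴴ * X * V).trace.re = ∑ i, ((Vᴴ * X * V) i i).re := by
    rw [Matrix.trace, Complex.re_sum]
    rfl
  rw [hre, Complex.re_sum]
  calc |∑ i, ((s i : ℂ) * (Vᴴ * X * V) i i).re|
      ≤ ∑ i, |((s i : ℂ) * (Vᴴ * X * V) i i).re| := Finset.abs_sum_le_sum_abs _ _
    _ ≤ ∑ i, ((Vᴴ * X * V) i i).re := by
        apply Finset.sum_le_sum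
        intro i _
        rw [Complex.re_ofReal_mul, abs_mul, abs_of_nonneg (diag_entry_nonneg hY i).1]
        exact mul_le_of_le_one_left (diag_entry_nonneg hY i).1 (hs i)

end Helpers

section Helpers2
variable {n : Type*} [Fintype n] [DecidableEq n]
set_option linter.unusedSectionVars false

lemma trace_conjTranspose_mul_eq (C D : Matrix n n ℂ) :
    (Cᴴ * D).trace = ∑ p : n × n, (starRingEnd ℂ) (C p.1 p.2) * D p.1 p.2 := by
  rw [Matrix.trace, Fintype.sum_prod_type]
  simp only [Matrix.diag_apply, Matrix.mul_apply, Matrix.conjTranspose_apply]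
  rw [Finset.sum_comm]
  rfl

lemma trace_conjTranspose_mul_self_re (C : Matrix n n ℂ) :
    (Cᴴ * C).trace.re = ∑ p : n × n, ‖C p.1 p.2‖ ^ 2 := by
  rw [trace_conjTranspose_mul_eq, Complex.re_sum]
  congr 1
  ext p
  simp [← Complex.normSq_eq_conj_mul_self, Complex.normSq_eq_norm_sq,
    ← Complex.ofReal_pow]

/-- Cauchy-Schwarz for the Frobenius inner product. -/
lemma re_trace_conjTranspose_mul_le (A B : Matrix n n ℂ) :
    |((Aᴴ * B).trace).re| ≤ Real.sqrt ((Aᴴ * A).trace.re) * Real.sqrt ((Bᴴ * B).trace.re) := by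
  rw [trace_conjTranspose_mul_eq, trace_conjTranspose_mul_self_re,
    trace_conjTranspose_mul_self_re, Complex.re_sum]
  calc |∑ p : n × n, ((starRingEnd ℂ) (A p.1 p.2) * B p.1 p.2).re|
      ≤ ∑ p : n × n, ‖(starRingEnd ℂ) (A p.1 p.2) * B p.1 p.2‖ := by
        refine (Finset.abs_sum_le_sum_abs _ _).trans (Finset.sum_le_sum fun p _ => ?_)
        exact Complex.abs_re_le_norm _
    _ = ∑ p : n × n, ‖A p.1 p.2‖ * ‖B p.1 p.2‖ := by
        congr 1; ext p; rw [norm_mul, RCLike.norm_conj]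
    _ ≤ Real.sqrt (∑ p : n × n, ‖A p.1 p.2‖ ^ 2) * Real.sqrt (∑ p : n × n, ‖B p.1 p.2‖ ^ 2) :=
        Real.sum_mul_le_sqrt_mul_sqrt _ _ _

end Helpers2

section Helpers3
variable {n : Type*} [Fintype n] [DecidableEq n]
set_option linter.unusedSectionVars false

lemma conj_diag_mul {V : Matrix n n ℂ} (hV1 : Vᴴ * V = 1) (d e : n → ℂ) :
    (V * Matrix.diagonal d * Vᴴ) * (V * Matrix.diagonal e * Vᴴ)
      = V * Matrix.diagonal (fun i => d i * e i) * Vᴴ := by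
  calc (V * Matrix.diagonal d * Vᴴ) * (V * Matrix.diagonal e * Vᴴ)
      = V * Matrix.diagonal d * (Vᴴ * V) * Matrix.diagonal e * Vᴴ := by
        simp only [Matrix.mul_assoc]
    _ = V * (Matrix.diagonal d * Matrix.diagonal e) * Vᴴ := by
        rw [hV1]; simp only [Matrix.mul_one, Matrix.mul_assoc]
    _ = V * Matrix.diagonal (fun i => d i * e i) * Vᴴ := by
        rw [Matrix.diagonal_mul_diagonal]

lemma trace_conj_diag {V : Matrix n n ℂ} (hV1 : Vᴴ * V = 1) (d : n → ℂ) :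
    (V * Matrix.diagonal d * Vᴴ).trace = ∑ i, d i := by
  rw [Matrix.trace_mul_comm, ← Matrix.mul_assoc, hV1, Matrix.one_mul]
  simp [Matrix.trace, Matrix.diag]

lemma spectral' {H : Matrix n n ℂ} (hH : H.IsHermitian) :
    H = (Matrix.IsHermitian.eigenvectorUnitary hH : Matrix n n ℂ) *
      Matrix.diagonal (fun i => ((hH.eigenvalues i : ℝ) : ℂ)) *
      (Matrix.IsHermitian.eigenvectorUnitary hH : Matrix n n ℂ)ᴴ := by
  have := hH.spectral_theorem
  rw [Unitary.conjStarAlgAut_apply, Matrix.star_eq_conjTranspose] at this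
  exact this

lemma traceNorm_eq_sum_abs_eigenvalues {H : Matrix n n ℂ} (hH : H.IsHermitian) :
    traceNorm H = ∑ i, |hH.eigenvalues i| := by
  set V : Matrix n n ℂ := (Matrix.IsHermitian.eigenvectorUnitary hH : Matrix n n ℂ) with hVdef
  have hV : V ∈ Matrix.unitaryGroup n ℂ := (Matrix.IsHermitian.eigenvectorUnitary hH).2
  have hV1 : Vᴴ * V = 1 := by
    rw [← Matrix.star_eq_conjTranspose]; exact Matrix.mem_unitaryGroup_iff'.mp hV
  set B : Matrix n n ℂ := V * Matrix.diagonal (fun i => ((|hH.eigenvalues i| : ℝ) : ℂ)) * Vᴴ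
    with hBdef
  have hBpsd : B.PosSemidef := by
    refine Matrix.PosSemidef.mul_mul_conjTranspose_same ?_ V
    rw [Matrix.posSemidef_diagonal_iff]
    intro i; rw [Complex.zero_le_real]; exact abs_nonneg _
  have hspec := spectral' hH
  have hBB : B ^ 2 = Hᴴ * H := by
    rw [pow_two, hH.eq, hBdef, conj_diag_mul hV1]
    calc V * Matrix.diagonal (fun i => ((|hH.eigenvalues i| : ℝ) : ℂ) *
            ((|hH.eigenvalues i| : ℝ) : ℂ)) * Vᴴ
        = V * Matrix.diagonal (fun i => ((hH.eigenvalues i : ℝ) : ℂ) *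
            ((hH.eigenvalues i : ℝ) : ℂ)) * Vᴴ := by
          have hfun : (fun i => ((|hH.eigenvalues i| : ℝ) : ℂ) * ((|hH.eigenvalues i| : ℝ) : ℂ))
              = fun i => ((hH.eigenvalues i : ℝ) : ℂ) * ((hH.eigenvalues i : ℝ) : ℂ) := by
            funext i
            rw [← Complex.ofReal_mul, ← Complex.ofReal_mul, abs_mul_abs_self]
          rw [hfun]
      _ = (V * Matrix.diagonal (fun i => ((hH.eigenvalues i : ℝ) : ℂ)) * Vᴴ) *
            (V * Matrix.diagonal (fun i => ((hH.eigenvalues i : ℝ) : ℂ)) * Vᴴ) :=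
          (conj_diag_mul hV1 _ _).symm
      _ = H * H := by rw [← hspec]
  have hsqrt : B = (Matrix.posSemidef_conjTranspose_mul_self H).sqrt :=
    hBpsd.eq_sqrt_of_sq_eq (Matrix.posSemidef_conjTranspose_mul_self H) hBB
  unfold traceNorm
  rw [← hsqrt, hBdef, trace_conj_diag hV1, Complex.re_sum]
  simp

lemma re_trace_sdw_self {H : Matrix n n ℂ} (hH : H.IsHermitian) :
    ((sdw ((Matrix.IsHermitian.eigenvectorUnitary hH : Matrix n n ℂ))
        (fun i => if hH.eigenvalues i < 0 then -1 else 1) * H).trace).re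
      = ∑ i, |hH.eigenvalues i| := by
  set V : Matrix n n ℂ := (Matrix.IsHermitian.eigenvectorUnitary hH : Matrix n n ℂ)
  have hV : V ∈ Matrix.unitaryGroup n ℂ := (Matrix.IsHermitian.eigenvectorUnitary hH).2
  have hV1 : Vᴴ * V = 1 := by
    rw [← Matrix.star_eq_conjTranspose]; exact Matrix.mem_unitaryGroup_iff'.mp hV
  have h1 : sdw V (fun i => if hH.eigenvalues i < 0 then -1 else 1) * H
      = sdw V (fun i => if hH.eigenvalues i < 0 then -1 else 1) *
        (V * Matrix.diagonal (fun i => ((hH.eigenvalues i : ℝ) : ℂ)) * Vᴴ) := by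
    rw [← spectral' hH]
  rw [h1, sdw, conj_diag_mul hV1, trace_conj_diag hV1, Complex.re_sum]
  congr 1
  ext i
  rw [← Complex.ofReal_mul, Complex.ofReal_re]
  by_cases h : hH.eigenvalues i < 0
  · rw [if_pos h, abs_of_neg h]; ring
  · rw [if_neg h, abs_of_nonneg (le_of_not_gt h)]; ring

lemma traceNorm_le_of_sdw {H : Matrix n n ℂ} (hH : H.IsHermitian) {c : ℝ}
    (h : ∀ V ∈ Matrix.unitaryGroup n ℂ, ∀ s : n → ℝ, (∀ i, |s i| ≤ 1) →
      ((sdw V s * H).trace).re ≤ c) : traceNorm H ≤ c := by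
  rw [traceNorm_eq_sum_abs_eigenvalues hH, ← re_trace_sdw_self hH]
  refine h _ (Matrix.IsHermitian.eigenvectorUnitary hH).2 _ (fun i => ?_)
  split <;> simp

lemma posSemidef_sum {κ : Type*} (s : Finset κ) (f : κ → Matrix n n ℂ)
    (h : ∀ i ∈ s, (f i).PosSemidef) : (∑ i ∈ s, f i).PosSemidef := by
  classical
  induction s using Finset.induction_on with
  | empty => simpa using Matrix.PosSemidef.zero
  | insert _ _ hx ih =>
    rw [Finset.sum_insert hx]
    exact (h _ (Finset.mem_insert_self _ _)).add
      (ih fun i hi => h i (Finset.mem_insert_of_mem hi))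

end Helpers3

section Helpers4
variable {a b : ℕ} [NeZero a]
set_option linter.unusedSectionVars false

lemma kron_conjT (X : Matrix (Fin a) (Fin a) ℂ) (Y : Matrix (Fin b) (Fin b) ℂ) :
    (X ⊗ₖ Y)ᴴ = Xᴴ ⊗ₖ Yᴴ := by
  ext ⟨k, i⟩ ⟨l, j⟩
  simp [Matrix.conjTranspose_apply, Matrix.kroneckerMap_apply, star_mul', mul_comm]

lemma stdB_herm : (Matrix.single (0 : Fin a) (0 : Fin a) (1 : ℂ))ᴴ
    = Matrix.single (0 : Fin a) (0 : Fin a) (1 : ℂ) := by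
  ext k l
  simp [Matrix.conjTranspose_apply, Matrix.single, and_comm, apply_ite star]

lemma trace_stdB : (Matrix.single (0 : Fin a) (0 : Fin a) (1 : ℂ)).trace = 1 := by
  simp [Matrix.trace, Matrix.diag, Matrix.single]

lemma trace_ptraceA (M : Matrix (Fin a × Fin b) (Fin a × Fin b) ℂ) :
    (ptraceA M).trace = M.trace := by
  rw [Matrix.trace, Matrix.trace, Fintype.sum_prod_type]
  simp only [ptraceA, Matrix.diag_apply, Matrix.of_apply]
  rw [Finset.sum_comm]

lemma sigma_eq_sum (M : Matrix (Fin a × Fin b) (Fin a × Fin b) ℂ) :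
    (Matrix.single (0 : Fin a) (0 : Fin a) (1 : ℂ)) ⊗ₖ ptraceA M
      = ∑ m : Fin a,
        ((Matrix.single (0 : Fin a) m (1 : ℂ) ⊗ₖ (1 : Matrix (Fin b) (Fin b) ℂ)) * M *
          (Matrix.single (0 : Fin a) m (1 : ℂ) ⊗ₖ (1 : Matrix (Fin b) (Fin b) ℂ))ᴴ) := by
  ext ⟨k, i⟩ ⟨l, j⟩
  rw [Matrix.sum_apply]
  simp only [Matrix.mul_apply, Matrix.conjTranspose_apply, Matrix.kroneckerMap_apply,
    Matrix.single, Matrix.one_apply, Matrix.of_apply, ptraceA, Fintype.sum_prod_type]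
  simp [Finset.sum_ite_eq, Finset.sum_ite_eq', ite_and, apply_ite star, mul_comm,
    Finset.mul_sum]

end Helpers4

lemma one_le_rank {κ : Type*} [Fintype κ] [DecidableEq κ] {M : Matrix κ κ ℂ}
    (hM : M.trace = 1) : 1 ≤ M.rank := by
  rw [Nat.one_le_iff_ne_zero]
  intro h
  have h0 : LinearMap.range M.mulVecLin = ⊥ := Submodule.finrank_eq_zero.mp h
  rw [LinearMap.range_eq_bot] at h0
  have hM0 : M = 0 := by
    ext i j
    have h1 : M *ᵥ Pi.single j 1 = 0 := by
      have := congrFun (congrArg DFunLike.coe h0) (Pi.single j 1)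
      simpa [Matrix.mulVecLin_apply] using this
    have h2 := congrFun h1 i
    simpa [Matrix.mulVec_single] using h2
  rw [hM0] at hM
  simp at hM

theorem traceDist_le_of_approx_disentangling {a b : ℕ} [NeZero a]
    (ρ : Matrix (Fin a × Fin b) (Fin a × Fin b) ℂ)
    (hρ : ρ.PosSemidef) (hρ1 : ρ.trace = 1)
    (U : Matrix (Fin a × Fin b) (Fin a × Fin b) ℂ)
    (hU : U ∈ Matrix.unitaryGroup (Fin a × Fin b) ℂ)
    (ε : ℝ)
    (hdis : 1 - ε ≤ (((U * ρ * Uᴴ) *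
      ((Matrix.single (0 : Fin a) (0 : Fin a) (1 : ℂ)) ⊗ₖ
        (1 : Matrix (Fin b) (Fin b) ℂ))).trace).re) :
    traceDist (U * ρ * Uᴴ)
      ((Matrix.single (0 : Fin a) (0 : Fin a) (1 : ℂ)) ⊗ₖ ptraceA (U * ρ * Uᴴ))
      ≤ 2 * Real.sqrt ((ρ.rank : ℝ) * ε) := by
  have hρ' : (U * ρ * Uᴴ).PosSemidef := hρ.mul_mul_conjTranspose_same U
  set ρ' := U * ρ * Uᴴ with hρ'def
  set P : Matrix (Fin a × Fin b) (Fin a × Fin b) ℂ :=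
    (Matrix.single (0 : Fin a) (0 : Fin a) (1 : ℂ)) ⊗ₖ (1 : Matrix (Fin b) (Fin b) ℂ)
    with hPdef
  set σ := (Matrix.single (0 : Fin a) (0 : Fin a) (1 : ℂ)) ⊗ₖ ptraceA ρ' with hσdef
  have hUU : Uᴴ * U = 1 := by
    rw [← Matrix.star_eq_conjTranspose]; exact Matrix.mem_unitaryGroup_iff'.mp hU
  have hPH : Pᴴ = P := by rw [hPdef, kron_conjT, stdB_herm, Matrix.conjTranspose_one]
  have hPP : P * P = P := by
    rw [hPdef, ← Matrix.mul_kronecker_mul, Matrix.single_mul_single_same, Matrix.one_mul]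
    norm_num
  have htrρ' : ρ'.trace = 1 := by
    rw [hρ'def, Matrix.trace_mul_cycle, hUU, Matrix.one_mul, hρ1]
  set W : Fin a → Matrix (Fin a × Fin b) (Fin a × Fin b) ℂ := fun m =>
    ((Matrix.single (0 : Fin a) m (1 : ℂ) ⊗ₖ (1 : Matrix (Fin b) (Fin b) ℂ)) * ρ' *
      (Matrix.single (0 : Fin a) m (1 : ℂ) ⊗ₖ (1 : Matrix (Fin b) (Fin b) ℂ))ᴴ)
    with hWdef
  have hWpsd : ∀ m, (W m).PosSemidef := fun m => hρ'.mul_mul_conjTranspose_same _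
  have hσsum : σ = ∑ m, W m := sigma_eq_sum ρ'
  have hW0 : W 0 = P * ρ' * P := by
    have : W 0 = P * ρ' * Pᴴ := rfl
    rw [this, hPH]
  set E := σ - P * ρ' * P with hEdef
  have hEsum : E = ∑ m ∈ Finset.univ.erase 0, W m := by
    rw [hEdef, hσsum, ← Finset.add_sum_erase Finset.univ W (Finset.mem_univ 0), ← hW0]
    abel
  have hEpsd : E.PosSemidef := hEsum ▸ posSemidef_sum _ _ (fun m _ => hWpsd m)
  have hσpsd : σ.PosSemidef := hσsum ▸ posSemidef_sum _ _ (fun m _ => hWpsd m)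
  have htrσ : σ.trace = 1 := by
    rw [hσdef, Matrix.trace_kronecker, trace_stdB, trace_ptraceA, htrρ', one_mul]
  set t : ℝ := ((ρ' * P).trace).re with htdef
  have htPP : (P * ρ' * P).trace = (ρ' * P).trace := by
    rw [Matrix.trace_mul_cycle, hPP, Matrix.trace_mul_comm]
  have hEtr : E.trace.re = 1 - t := by
    rw [hEdef, Matrix.trace_sub, htPP, htrσ, Complex.sub_re, Complex.one_re, htdef]
  have h1t : 0 ≤ 1 - t := hEtr ▸ trace_re_nonneg hEpsd
  have hεt : 1 - t ≤ ε := by linarith [hdis]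
  have hε0 : 0 ≤ ε := le_trans h1t hεt
  have ht1 : t ≤ 1 := by linarith
  set Q := (1 : Matrix (Fin a × Fin b) (Fin a × Fin b) ℂ) - P with hQdef
  have hQH : Qᴴ = Q := by
    rw [hQdef, Matrix.conjTranspose_sub, Matrix.conjTranspose_one, hPH]
  have hQQpsd : (Q * ρ' * Q).PosSemidef := by
    have := hρ'.mul_mul_conjTranspose_same Q; rwa [hQH] at this
  have hQtr : (Q * ρ' * Q).trace.re = 1 - t := by
    have hexp : Q * ρ' * Q = ρ' - P * ρ' - ρ' * P + P * ρ' * P := by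
      rw [hQdef]; noncomm_ring
    rw [hexp, Matrix.trace_add, Matrix.trace_sub, Matrix.trace_sub, htPP,
      Matrix.trace_mul_comm P ρ', htrρ']
    simp [Complex.add_re, Complex.sub_re, htdef]
  have hPρP : (P * ρ' * P).PosSemidef := by
    have := hρ'.mul_mul_conjTranspose_same P; rwa [hPH] at this
  have hr1 : 1 ≤ (ρ.rank : ℝ) := by exact_mod_cast one_le_rank hρ1
  have hD : (ρ' - σ).IsHermitian := hρ'.1.sub hσpsd.1
  have htd : traceDist ρ' σ = traceNorm (ρ' - σ) / 2 := rfl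
  rcases le_or_gt ε 1 with hεle | hεgt
  · -- main case: ε ≤ 1
    have hbound : traceNorm (ρ' - σ) ≤ 2 * Real.sqrt ε + 2 * ε := by
      apply traceNorm_le_of_sdw hD
      intro V hV s hs
      set S := sdw V s with hSdef
      have hSH : Sᴴ = S := sdw_conjTranspose V s
      have hdecomp : ρ' - σ = P * ρ' * Q + Q * ρ' * P + Q * ρ' * Q - E := by
        rw [hEdef, hQdef]; noncomm_ring
      rw [hdecomp]
      have hexpand : (S * (P * ρ' * Q + Q * ρ' * P + Q * ρ' * Q - E)).trace.re
          = (S * (P * ρ' * Q)).trace.re + (S * (Q * ρ' * P)).trace.re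
            + (S * (Q * ρ' * Q)).trace.re - (S * E).trace.re := by
        rw [Matrix.mul_sub, Matrix.mul_add, Matrix.mul_add, Matrix.trace_sub,
          Matrix.trace_add, Matrix.trace_add]
        simp [Complex.add_re, Complex.sub_re]
      rw [hexpand]
      have hcross : (S * (Q * ρ' * P)).trace.re = (S * (P * ρ' * Q)).trace.re := by
        have h1 : (S * (P * ρ' * Q))ᴴ = Q * ρ' * P * S := by
          rw [Matrix.conjTranspose_mul, Matrix.conjTranspose_mul, Matrix.conjTranspose_mul,
            hSH, hPH, hQH, hρ'.1.eq]
          simp only [Matrix.mul_assoc]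
        have h2 : (S * (Q * ρ' * P)).trace = star ((S * (P * ρ' * Q)).trace) := by
          rw [← Matrix.trace_conjTranspose, h1, Matrix.trace_mul_comm]
        rw [h2, Complex.star_def, Complex.conj_re]
      rw [hcross]
      set R := hρ'.sqrt with hRdef
      have hRH : Rᴴ = R := hρ'.posSemidef_sqrt.1
      have hRR : R * R = ρ' := hρ'.sqrt_mul_self
      have hA : S * (P * ρ' * Q) = (R * P * S)ᴴ * (R * Q) := by
        rw [Matrix.conjTranspose_mul, Matrix.conjTranspose_mul, hRH, hPH, hSH, ← hRR]
        simp only [Matrix.mul_assoc]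
      have hAA : (((R * P * S)ᴴ * (R * P * S)).trace).re ≤ t := by
        have e1 : (R * P * S)ᴴ * (R * P * S) = S * (P * ρ' * P) * S := by
          rw [Matrix.conjTranspose_mul, Matrix.conjTranspose_mul, hRH, hPH, hSH, ← hRR]
          simp only [Matrix.mul_assoc]
        have e2 : (S * (P * ρ' * P) * S).trace = (sdw V (fun i => s i * s i)
            * (P * ρ' * P)).trace := by
          rw [Matrix.trace_mul_cycle,
            show S * S = sdw V (fun i => s i * s i) by rw [hSdef]; exact sdw_mul_sdw hV s s]
        rw [e1, e2]
        have hs2 : ∀ i, |s i * s i| ≤ 1 := fun i => by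
          rw [abs_mul]
          exact mul_le_one₀ (hs i) (abs_nonneg _) (hs i)
        calc (sdw V (fun i => s i * s i) * (P * ρ' * P)).trace.re
            ≤ |(sdw V (fun i => s i * s i) * (P * ρ' * P)).trace.re| := le_abs_self _
          _ ≤ (P * ρ' * P).trace.re := re_trace_sdw_mul_le hV hs2 hPρP
          _ = t := by rw [htPP]
      have hBB : (((R * Q)ᴴ * (R * Q)).trace).re = 1 - t := by
        have e1 : (R * Q)ᴴ * (R * Q) = Q * ρ' * Q := by
          rw [Matrix.conjTranspose_mul, hRH, hQH, ← hRR]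
          simp only [Matrix.mul_assoc]
        rw [e1, hQtr]
      have hcrossbound : (S * (P * ρ' * Q)).trace.re ≤ Real.sqrt ε := by
        calc (S * (P * ρ' * Q)).trace.re
            ≤ |(((R * P * S)ᴴ * (R * Q)).trace).re| := by rw [← hA]; exact le_abs_self _
          _ ≤ Real.sqrt ((((R * P * S)ᴴ * (R * P * S)).trace).re)
              * Real.sqrt ((((R * Q)ᴴ * (R * Q)).trace).re) :=
            re_trace_conjTranspose_mul_le _ _
          _ ≤ 1 * Real.sqrt ε := by
            apply mul_le_mul
            · calc Real.sqrt ((((R * P * S)ᴴ * (R * P * S)).trace).re)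
                  ≤ Real.sqrt t := Real.sqrt_le_sqrt hAA
                _ ≤ 1 := Real.sqrt_le_one.mpr ht1
            · rw [hBB]; exact Real.sqrt_le_sqrt hεt
            · exact Real.sqrt_nonneg _
            · norm_num
          _ = Real.sqrt ε := one_mul _
      have hthird : (S * (Q * ρ' * Q)).trace.re ≤ ε := by
        calc (S * (Q * ρ' * Q)).trace.re ≤ |(S * (Q * ρ' * Q)).trace.re| := le_abs_self _
          _ ≤ (Q * ρ' * Q).trace.re := re_trace_sdw_mul_le hV hs hQQpsd
          _ = 1 - t := hQtr
          _ ≤ ε := hεt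
      have hfourth : -(S * E).trace.re ≤ ε := by
        calc -(S * E).trace.re ≤ |(S * E).trace.re| := neg_le_abs _
          _ ≤ E.trace.re := re_trace_sdw_mul_le hV hs hEpsd
          _ = 1 - t := hEtr
          _ ≤ ε := hεt
      linarith
    rw [htd]
    have hsq : Real.sqrt ε + ε ≤ 2 * Real.sqrt ε := by
      nlinarith [Real.sq_sqrt hε0, Real.sqrt_nonneg ε, Real.sqrt_le_one.mpr hεle]
    have hmono : Real.sqrt ε ≤ Real.sqrt ((ρ.rank : ℝ) * ε) := by
      apply Real.sqrt_le_sqrt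
      nlinarith
    linarith
  · -- trivial case: ε > 1
    have hbound : traceNorm (ρ' - σ) ≤ 2 := by
      apply traceNorm_le_of_sdw hD
      intro V hV s hs
      rw [Matrix.mul_sub, Matrix.trace_sub, Complex.sub_re]
      have b1 := re_trace_sdw_mul_le hV hs hρ'
      have b2 := re_trace_sdw_mul_le hV hs hσpsd
      rw [htrρ', Complex.one_re] at b1
      rw [htrσ, Complex.one_re] at b2
      have := abs_le.mp b1
      have := abs_le.mp b2
      linarith [(abs_le.mp b1).2, (abs_le.mp b2).1]
    rw [htd]
    have hsq : (1 : ℝ) ≤ Real.sqrt ((ρ.rank : ℝ) * ε) := by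
      rw [show (1 : ℝ) = Real.sqrt 1 from (Real.sqrt_one).symm]
      apply Real.sqrt_le_sqrt
      nlinarith
    linarith
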